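/- For every fixed integer k ≥ 0, there exists a constant C > 0 such that for every integer N ≥ 1, with h = 1/N, one has max_{0 ≤ i ≤ N} |U_k(t_i) − u_k(t_i)| ≤ C h² and max_{0 ≤ i ≤ N} |V_k(t_i) − v_k(t_i)| ≤ C h². -/

import Mathlib

open Set MeasureTheory

/-- The Green function of the problem `u''' = ψ`, `u(0) = u'(0) = u'(1) = 0` on `[0,1]`. -/
noncomputable def G01 (t s : ℝ) : ℝ :=
  if s ≤ t then s / 2 * (t ^ 2 - 2 * t + s) else t ^ 2 / 2 * (s - 1)

/-- The quadratic polynomial with `g(0) = b1`, `g'(0) = b2`, `g'(1) = b3`. -/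
noncomputable def gq (b1 b2 b3 t : ℝ) : ℝ := b1 + b2 * t + (b3 - b2) / 2 * t ^ 2

/-- Trapezoidal weights: `ρ_0 = ρ_N = 1/2` and `ρ_j = 1` for `1 ≤ j ≤ N − 1`. -/
noncomputable def trapWeight (N j : ℕ) : ℝ := if j = 0 ∨ j = N then 1 / 2 else 1

/-- Continuous iteration: `ψ₀(t) = f(t,0,0)`, `ψ_{k+1}(t) = f(t, u_k(t), v_k(t))`, where
`u_k(t) = g(t) + ∫₀¹ G(t,s) ψ_k(s) ds` and `v_k(t) = u_k(φ(t))`. -/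
noncomputable def psiC (f : ℝ → ℝ → ℝ → ℝ) (φ : ℝ → ℝ) (b1 b2 b3 : ℝ) : ℕ → ℝ → ℝ
  | 0 => fun t => f t 0 0
  | k + 1 => fun t =>
      f t (gq b1 b2 b3 t + ∫ s in (0:ℝ)..1, G01 t s * psiC f φ b1 b2 b3 k s)
        (gq b1 b2 b3 (φ t) + ∫ s in (0:ℝ)..1, G01 (φ t) s * psiC f φ b1 b2 b3 k s)

/-- `u_k(t) = g(t) + ∫₀¹ G(t,s) ψ_k(s) ds`. -/
noncomputable def uC (f : ℝ → ℝ → ℝ → ℝ) (φ : ℝ → ℝ) (b1 b2 b3 : ℝ) (k : ℕ) (t : ℝ) : ℝ :=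
  gq b1 b2 b3 t + ∫ s in (0:ℝ)..1, G01 t s * psiC f φ b1 b2 b3 k s

/-- `v_k(t) = u_k(φ(t))`. -/
noncomputable def vC (f : ℝ → ℝ → ℝ → ℝ) (φ : ℝ → ℝ) (b1 b2 b3 : ℝ) (k : ℕ) (t : ℝ) : ℝ :=
  uC f φ b1 b2 b3 k (φ t)

/-- Discrete iteration: `Ψ₀(t_i) = f(t_i,0,0)`,
`Ψ_{k+1}(t_i) = f(t_i, U_k(t_i), V_k(t_i))`, where `U_k`, `V_k` are trapezoidal
approximations of `u_k`, `v_k` on the uniform grid `t_i = i/N`. -/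
noncomputable def PsiD (f : ℝ → ℝ → ℝ → ℝ) (φ : ℝ → ℝ) (b1 b2 b3 : ℝ) (N : ℕ) :
    ℕ → ℕ → ℝ
  | 0 => fun i => f ((i : ℝ) / N) 0 0
  | k + 1 => fun i =>
      f ((i : ℝ) / N)
        (gq b1 b2 b3 ((i : ℝ) / N) + ∑ j ∈ Finset.range (N + 1),
          (1 / (N:ℝ)) * trapWeight N j * G01 ((i : ℝ) / N) ((j : ℝ) / N) *
            PsiD f φ b1 b2 b3 N k j)
        (gq b1 b2 b3 (φ ((i : ℝ) / N)) + ∑ j ∈ Finset.range (N + 1),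
          (1 / (N:ℝ)) * trapWeight N j * G01 (φ ((i : ℝ) / N)) ((j : ℝ) / N) *
            PsiD f φ b1 b2 b3 N k j)

/-- `U_k(t_i) = g(t_i) + Σ_j h ρ_j G(t_i, t_j) Ψ_k(t_j)`. -/
noncomputable def UD (f : ℝ → ℝ → ℝ → ℝ) (φ : ℝ → ℝ) (b1 b2 b3 : ℝ) (N k i : ℕ) : ℝ :=
  gq b1 b2 b3 ((i : ℝ) / N) + ∑ j ∈ Finset.range (N + 1),
    (1 / (N:ℝ)) * trapWeight N j * G01 ((i : ℝ) / N) ((j : ℝ) / N) * PsiD f φ b1 b2 b3 N k j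

/-- `V_k(t_i) = g(ξ_i) + Σ_j h ρ_j G(ξ_i, t_j) Ψ_k(t_j)`, with `ξ_i = φ(t_i)`. -/
noncomputable def VD (f : ℝ → ℝ → ℝ → ℝ) (φ : ℝ → ℝ) (b1 b2 b3 : ℝ) (N k i : ℕ) : ℝ :=
  gq b1 b2 b3 (φ ((i : ℝ) / N)) + ∑ j ∈ Finset.range (N + 1),
    (1 / (N:ℝ)) * trapWeight N j * G01 (φ ((i : ℝ) / N)) ((j : ℝ) / N) *
      PsiD f φ b1 b2 b3 N k j


open intervalIntegral


lemma clamp_cont (a b : ℝ) : Continuous (fun x : ℝ => max a (min b x)) :=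
  continuous_const.max (continuous_const.min continuous_id)

lemma clamp_mem {a b : ℝ} (hab : a ≤ b) (x : ℝ) : max a (min b x) ∈ Icc a b :=
  ⟨le_max_left _ _, max_le (hab) (min_le_left _ _)⟩

lemma clamp_eq {a b x : ℝ} (hx : x ∈ Icc a b) : max a (min b x) = x := by
  rw [min_eq_right hx.2, max_eq_right hx.1]

theorem trap_err (F F' F'' : ℝ → ℝ) (a b M : ℝ) (hab : a ≤ b)
    (hd1 : ∀ x ∈ Icc a b, HasDerivWithinAt F (F' x) (Icc a b) x)
    (hd2 : ∀ x ∈ Icc a b, HasDerivWithinAt F' (F'' x) (Icc a b) x)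
    (hM : ∀ x ∈ Icc a b, |F'' x| ≤ M) :
    |(∫ x in a..b, F x) - (b - a) / 2 * (F a + F b)| ≤ M * (b - a) ^ 3 / 2 := by
  have hM0 : 0 ≤ M := le_trans (abs_nonneg _) (hM a ⟨le_refl a, hab⟩)
  have hFc : ContinuousOn F (Icc a b) := fun x hx =>
    (hd1 x hx).continuousWithinAt
  set c : ℝ → ℝ := fun x => max a (min b x) with hc
  have hFt : Continuous (F ∘ c) :=
    hFc.comp_continuous (clamp_cont a b) (clamp_mem hab)
  have hGq : ∀ x : ℝ, HasDerivAt (fun u => ∫ s in a..u, (F ∘ c) s) ((F ∘ c) x) x := by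
    intro x
    exact (hFt.integral_hasStrictDerivAt a x).hasDerivAt
  set e : ℝ → ℝ := fun x => (∫ s in a..x, (F ∘ c) s) - (x - a) / 2 * (F a + F x) with he
  set e1 : ℝ → ℝ := fun x => (F x - F a) / 2 - (x - a) / 2 * F' x with he1
  set e2 : ℝ → ℝ := fun x => -((x - a) / 2 * F'' x) with he2
  have hde : ∀ x ∈ Icc a b, HasDerivWithinAt e (e1 x) (Icc a b) x := by
    intro x hx
    have h1 : HasDerivWithinAt (fun u => ∫ s in a..u, (F ∘ c) s) (F x) (Icc a b) x := by
      have := (hGq x).hasDerivWithinAt (s := Icc a b)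
      simpa [Function.comp, hc, clamp_eq hx] using this
    have h2 : HasDerivWithinAt (fun u : ℝ => (u - a) / 2 * (F a + F u))
        (1 / 2 * (F a + F x) + (x - a) / 2 * F' x) (Icc a b) x := by
      have ha : HasDerivWithinAt (fun u : ℝ => (u - a) / 2) (1 / 2) (Icc a b) x := by
        simpa using (((hasDerivAt_id x).sub_const a).div_const 2).hasDerivWithinAt
      have hb2 : HasDerivWithinAt (fun u : ℝ => F a + F u) (F' x) (Icc a b) x :=
        (hd1 x hx).const_add (F a)
      exact ha.mul hb2
    have := h1.sub h2
    convert this using 1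
    · rfl
    · rfl
    · rfl
    simp [he1]; ring
  have hde1 : ∀ x ∈ Icc a b, HasDerivWithinAt e1 (e2 x) (Icc a b) x := by
    intro x hx
    have h1 : HasDerivWithinAt (fun u : ℝ => (F u - F a) / 2) (F' x / 2) (Icc a b) x :=
      ((hd1 x hx).sub_const (F a)).div_const 2
    have h2 : HasDerivWithinAt (fun u : ℝ => (u - a) / 2 * F' u)
        (1 / 2 * F' x + (x - a) / 2 * F'' x) (Icc a b) x := by
      have ha : HasDerivWithinAt (fun u : ℝ => (u - a) / 2) (1 / 2) (Icc a b) x := by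
        simpa using (((hasDerivAt_id x).sub_const a).div_const 2).hasDerivWithinAt
      exact ha.mul (hd2 x hx)
    have := h1.sub h2
    convert this using 1
    · rfl
    · rfl
    · rfl
    simp [he2]; ring
  have hb1 : ∀ x ∈ Icc a b, ‖e2 x‖ ≤ M * (b - a) / 2 := by
    intro x hx
    have hx1 : 0 ≤ x - a := by linarith [hx.1]
    have hx2 : x - a ≤ b - a := by linarith [hx.2]
    have := hM x hx
    rw [Real.norm_eq_abs]
    simp only [he2, abs_neg, abs_mul, abs_div]
    rw [abs_of_nonneg hx1]
    calc (x - a) / |2| * |F'' x| ≤ (b - a) / 2 * M := by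
          rw [abs_two]
          apply mul_le_mul (by linarith) this (abs_nonneg _) (by linarith)
      _ = M * (b - a) / 2 := by ring
  have he1b : ∀ x ∈ Icc a b, ‖e1 x‖ ≤ M * (b - a) ^ 2 / 2 := by
    intro x hx
    have := (convex_Icc a b).norm_image_sub_le_of_norm_hasDerivWithin_le hde1 hb1
      (⟨le_refl a, hab⟩ : a ∈ Icc a b) hx
    have he1a : e1 a = 0 := by simp [he1]
    rw [he1a, sub_zero] at this
    calc ‖e1 x‖ ≤ M * (b - a) / 2 * ‖x - a‖ := this
      _ ≤ M * (b - a) ^ 2 / 2 := by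
          rw [Real.norm_eq_abs, abs_of_nonneg (by linarith [hx.1] : (0:ℝ) ≤ x - a)]
          nlinarith [mul_nonneg (mul_nonneg hM0 (show (0:ℝ) ≤ b - a by linarith)) (show (0:ℝ) ≤ b - x by linarith [hx.2])]
  have hfin := (convex_Icc a b).norm_image_sub_le_of_norm_hasDerivWithin_le hde he1b
    (⟨le_refl a, hab⟩ : a ∈ Icc a b) (⟨hab, le_refl b⟩ : b ∈ Icc a b)
  have hea : e a = 0 := by simp [he]
  rw [hea, sub_zero] at hfin
  have heb : e b = (∫ x in a..b, F x) - (b - a) / 2 * (F a + F b) := by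
    have : (∫ s in a..b, (F ∘ c) s) = ∫ x in a..b, F x := by
      apply intervalIntegral.integral_congr
      intro x hx
      rw [uIcc_of_le hab] at hx
      simp [Function.comp, hc, clamp_eq hx]
    show (∫ s in a..b, (F ∘ c) s) - (b - a) / 2 * (F a + F b) = _
    rw [this]
  rw [heb] at hfin
  rw [← Real.norm_eq_abs]
  calc ‖(∫ x in a..b, F x) - (b - a) / 2 * (F a + F b)‖ ≤ M * (b - a) ^ 2 / 2 * ‖b - a‖ := hfin
    _ ≤ M * (b - a) ^ 3 / 2 := by
        rw [Real.norm_eq_abs, abs_of_nonneg (by linarith : (0:ℝ) ≤ b - a)]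
        nlinarith [hM0, hab]


theorem trap_err_lip (F : ℝ → ℝ) (a b K : ℝ) (hab : a ≤ b) (hK : 0 ≤ K)
    (hFc : ContinuousOn F (Icc a b))
    (hlip : ∀ x ∈ Icc a b, ∀ y ∈ Icc a b, |F x - F y| ≤ K * |x - y|) :
    |(∫ x in a..b, F x) - (b - a) / 2 * (F a + F b)| ≤ 2 * K * (b - a) ^ 2 := by
  have hInt : IntervalIntegrable F volume a b :=
    (hFc.mono (by rw [uIcc_of_le hab])).intervalIntegrable
  have h1 : (∫ x in a..b, F x) - (b - a) * F a = ∫ x in a..b, (F x - F a) := by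
    rw [intervalIntegral.integral_sub hInt intervalIntegrable_const,
      intervalIntegral.integral_const]
    simp [smul_eq_mul]
  have h2 : ‖∫ x in a..b, (F x - F a)‖ ≤ K * (b - a) * |b - a| := by
    apply intervalIntegral.norm_integral_le_of_norm_le_const
    intro x hx
    rw [uIoc_of_le hab] at hx
    have hx' : x ∈ Icc a b := ⟨le_of_lt hx.1, hx.2⟩
    have := hlip x hx' a ⟨le_refl a, hab⟩
    rw [Real.norm_eq_abs]
    calc |F x - F a| ≤ K * |x - a| := this
      _ ≤ K * (b - a) := by
          apply mul_le_mul_of_nonneg_left _ hK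
          rw [abs_of_nonneg (by linarith [hx'.1])]
          linarith [hx'.2]
  have h3 : |(b - a) / 2 * (F a + F b) - (b - a) * F a| ≤ K * (b - a) ^ 2 / 2 := by
    have : (b - a) / 2 * (F a + F b) - (b - a) * F a = (b - a) / 2 * (F b - F a) := by ring
    rw [this, abs_mul, abs_of_nonneg (by linarith : (0:ℝ) ≤ (b - a) / 2)]
    have := hlip b ⟨hab, le_refl b⟩ a ⟨le_refl a, hab⟩
    calc (b - a) / 2 * |F b - F a| ≤ (b - a) / 2 * (K * |b - a|) := by
          apply mul_le_mul_of_nonneg_left this (by linarith)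
      _ = K * (b - a) ^ 2 / 2 := by
          rw [abs_of_nonneg (by linarith : (0:ℝ) ≤ b - a)]; ring
  rw [Real.norm_eq_abs, abs_of_nonneg (by linarith : (0:ℝ) ≤ b - a)] at h2
  calc |(∫ x in a..b, F x) - (b - a) / 2 * (F a + F b)|
      ≤ |(∫ x in a..b, F x) - (b - a) * F a| + |(b - a) / 2 * (F a + F b) - (b - a) * F a| := by
        rw [h1]
        have : (∫ x in a..b, (F x - F a)) - ((b-a)/2*(F a + F b) - (b-a)*F a)
            = (∫ x in a..b, F x) - (b - a) / 2 * (F a + F b) := by rw [← h1]; ring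
        rw [← this, ← h1]
        exact abs_sub _ _
    _ ≤ K * (b - a) * (b - a) + K * (b - a) ^ 2 / 2 := by
        rw [h1]; exact add_le_add h2 h3
    _ ≤ 2 * K * (b - a) ^ 2 := by nlinarith [mul_nonneg hK (sq_nonneg (b - a))]



lemma trapWeight_nonneg (N j : ℕ) : 0 ≤ trapWeight N j := by
  unfold trapWeight; split <;> norm_num

lemma trapWeight_le_one (N j : ℕ) : trapWeight N j ≤ 1 := by
  unfold trapWeight; split <;> norm_num

lemma trap_weight_sum (N : ℕ) (hN : 1 ≤ N) (F : ℕ → ℝ) :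
    ∑ j ∈ Finset.range (N + 1), trapWeight N j * F j
      = ∑ j ∈ Finset.range N, (F j + F (j + 1)) / 2 := by
  have key : ∀ j, trapWeight N j * F j
      = F j - (if j = 0 then F j / 2 else 0) - (if j = N then F j / 2 else 0) := by
    intro j
    unfold trapWeight
    by_cases h0 : j = 0
    · subst h0
      have : (0 : ℕ) ≠ N := by omega
      simp [this.symm, this]
      ring
    · by_cases hn : j = N
      · subst hn
        simp [h0]
        ring
      · simp [h0, hn]
  simp only [key, Finset.sum_sub_distrib]
  rw [Finset.sum_ite_eq' (Finset.range (N + 1)) 0 (fun j => F j / 2),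
    Finset.sum_ite_eq' (Finset.range (N + 1)) N (fun j => F j / 2)]
  simp only [Finset.mem_range, Nat.lt_succ_iff, Nat.zero_le, le_refl, if_pos]
  have h1 : ∑ j ∈ Finset.range N, (F j + F (j + 1)) / 2
      = (∑ j ∈ Finset.range N, F j) / 2 + (∑ j ∈ Finset.range N, F (j + 1)) / 2 := by
    rw [← Finset.sum_div, Finset.sum_add_distrib, add_div]
  have h2 : ∑ j ∈ Finset.range (N + 1), F j = (∑ j ∈ Finset.range N, F j) + F N :=
    Finset.sum_range_succ F N
  have h3 : ∑ j ∈ Finset.range (N + 1), F j = (∑ j ∈ Finset.range N, F (j + 1)) + F 0 :=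
    Finset.sum_range_succ' F N
  rw [h1]
  linarith [h2, h3]


lemma node_nonneg (N j : ℕ) : (0:ℝ) ≤ (j:ℝ)/N := by positivity

lemma node_le_one {N j : ℕ} (hN : 1 ≤ N) (hj : j ≤ N) : (j:ℝ)/N ≤ 1 := by
  have hNpos : (0:ℝ) < N := by exact_mod_cast hN
  rw [div_le_one hNpos]; exact_mod_cast hj

lemma node_mem {N j : ℕ} (hN : 1 ≤ N) (hj : j ≤ N) : (j:ℝ)/N ∈ Icc (0:ℝ) 1 :=
  ⟨node_nonneg N j, node_le_one hN hj⟩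

lemma node_mono {N : ℕ} {i j : ℕ} (hij : i ≤ j) : (i:ℝ)/N ≤ (j:ℝ)/N := by
  have hN0 : (0:ℝ) ≤ (N:ℝ)⁻¹ := by positivity
  rw [div_eq_mul_inv, div_eq_mul_inv]
  exact mul_le_mul_of_nonneg_right (by exact_mod_cast hij) hN0

lemma node_gap {N : ℕ} (hN : 1 ≤ N) (j : ℕ) : ((j:ℝ)+1)/N - (j:ℝ)/N = 1/N := by
  have hNpos : (0:ℝ) < N := by exact_mod_cast hN
  field_simp
  ring

lemma lip_glue (c : ℝ) (hc : c ∈ Icc (0:ℝ) 1)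
    (F F1 F1' F2 F2' : ℝ → ℝ) (L : ℝ)
    (hcong1 : ∀ s ∈ Icc (0:ℝ) 1, s ≤ c → F s = F1 s)
    (hcong2 : ∀ s ∈ Icc (0:ℝ) 1, c ≤ s → F s = F2 s)
    (hd11 : ∀ x ∈ Icc (0:ℝ) 1, HasDerivWithinAt F1 (F1' x) (Icc 0 1) x)
    (hd21 : ∀ x ∈ Icc (0:ℝ) 1, HasDerivWithinAt F2 (F2' x) (Icc 0 1) x)
    (hbl1 : ∀ x ∈ Icc (0:ℝ) 1, |F1' x| ≤ L)
    (hbl2 : ∀ x ∈ Icc (0:ℝ) 1, |F2' x| ≤ L) :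
    ∀ x ∈ Icc (0:ℝ) 1, ∀ y ∈ Icc (0:ℝ) 1, |F x - F y| ≤ L * |x - y| := by
  have hL : 0 ≤ L := le_trans (abs_nonneg _) (hbl1 0 (by norm_num))
  have A : ∀ x ∈ Icc (0:ℝ) c, ∀ y ∈ Icc (0:ℝ) c, |F x - F y| ≤ L * |x - y| := by
    intro x hx y hy
    have hsub : Icc (0:ℝ) c ⊆ Icc 0 1 := Icc_subset_Icc le_rfl hc.2
    have h := Convex.norm_image_sub_le_of_norm_hasDerivWithin_le
      (fun z hz => (hd11 z (hsub hz)).mono hsub) (fun z hz => hbl1 z (hsub hz))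
      (convex_Icc (0:ℝ) c) hy hx
    rw [hcong1 x (hsub hx) hx.2, hcong1 y (hsub hy) hy.2]
    simpa [Real.norm_eq_abs] using h
  have B : ∀ x ∈ Icc c 1, ∀ y ∈ Icc c 1, |F x - F y| ≤ L * |x - y| := by
    intro x hx y hy
    have hsub : Icc c 1 ⊆ Icc (0:ℝ) 1 := Icc_subset_Icc hc.1 le_rfl
    have h := Convex.norm_image_sub_le_of_norm_hasDerivWithin_le
      (fun z hz => (hd21 z (hsub hz)).mono hsub) (fun z hz => hbl2 z (hsub hz))
      (convex_Icc c 1) hy hx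
    rw [hcong2 x (hsub hx) hx.1, hcong2 y (hsub hy) hy.1]
    simpa [Real.norm_eq_abs] using h
  have main : ∀ x ∈ Icc (0:ℝ) 1, ∀ y ∈ Icc (0:ℝ) 1, x ≤ y → |F x - F y| ≤ L * |x - y| := by
    intro x hx y hy hxy
    rcases le_total y c with hyc | hcy
    · exact A x ⟨hx.1, le_trans hxy hyc⟩ y ⟨hy.1, hyc⟩
    · rcases le_total c x with hcx | hxc
      · exact B x ⟨hcx, hx.2⟩ y ⟨le_trans hcx hxy, hy.2⟩
      · have h1 := A x ⟨hx.1, hxc⟩ c ⟨hc.1, le_refl c⟩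
        have h2 := B c ⟨le_refl c, hc.2⟩ y ⟨hcy, hy.2⟩
        calc |F x - F y| ≤ |F x - F c| + |F c - F y| := abs_sub_le _ _ _
          _ ≤ L * |x - c| + L * |c - y| := add_le_add h1 h2
          _ = L * (c - x) + L * (y - c) := by
              rw [abs_of_nonpos (by linarith), abs_of_nonpos (by linarith)]; ring
          _ = L * |x - y| := by rw [abs_of_nonpos (by linarith)]; ring
  intro x hx y hy
  rcases le_total x y with h | h
  · exact main x hx y hy h
  · rw [abs_sub_comm, abs_sub_comm x y]; exact main y hy x hx h


lemma trap_err_on (F Gf G' G'' : ℝ → ℝ) (a b M : ℝ) (hab : a ≤ b)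
    (hsub : Icc a b ⊆ Icc (0:ℝ) 1)
    (heq : ∀ s ∈ Icc a b, F s = Gf s)
    (hd1 : ∀ x ∈ Icc (0:ℝ) 1, HasDerivWithinAt Gf (G' x) (Icc 0 1) x)
    (hd2 : ∀ x ∈ Icc (0:ℝ) 1, HasDerivWithinAt G' (G'' x) (Icc 0 1) x)
    (hM : ∀ x ∈ Icc (0:ℝ) 1, |G'' x| ≤ M) :
    |(∫ x in a..b, F x) - (b - a) / 2 * (F a + F b)| ≤ M * (b - a) ^ 3 / 2 := by
  have h1 : (∫ x in a..b, F x) = ∫ x in a..b, Gf x :=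
    intervalIntegral.integral_congr (by rw [uIcc_of_le hab]; exact fun x hx => heq x hx)
  rw [h1, heq a ⟨le_rfl, hab⟩, heq b ⟨hab, le_rfl⟩]
  exact trap_err Gf G' G'' a b M hab
    (fun x hx => (hd1 x (hsub hx)).mono hsub)
    (fun x hx => (hd2 x (hsub hx)).mono hsub)
    (fun x hx => hM x (hsub hx))

theorem quad_err (c : ℝ) (hc : c ∈ Icc (0:ℝ) 1)
    (F F1 F1' F1'' F2 F2' F2'' : ℝ → ℝ) (M L : ℝ) (hM : 0 ≤ M) (hL : 0 ≤ L)
    (hFc : ContinuousOn F (Icc 0 1))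
    (hcong1 : ∀ s ∈ Icc (0:ℝ) 1, s ≤ c → F s = F1 s)
    (hcong2 : ∀ s ∈ Icc (0:ℝ) 1, c ≤ s → F s = F2 s)
    (hd11 : ∀ x ∈ Icc (0:ℝ) 1, HasDerivWithinAt F1 (F1' x) (Icc 0 1) x)
    (hd12 : ∀ x ∈ Icc (0:ℝ) 1, HasDerivWithinAt F1' (F1'' x) (Icc 0 1) x)
    (hd21 : ∀ x ∈ Icc (0:ℝ) 1, HasDerivWithinAt F2 (F2' x) (Icc 0 1) x)
    (hd22 : ∀ x ∈ Icc (0:ℝ) 1, HasDerivWithinAt F2' (F2'' x) (Icc 0 1) x)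
    (hbl1 : ∀ x ∈ Icc (0:ℝ) 1, |F1' x| ≤ L) (hbm1 : ∀ x ∈ Icc (0:ℝ) 1, |F1'' x| ≤ M)
    (hbl2 : ∀ x ∈ Icc (0:ℝ) 1, |F2' x| ≤ L) (hbm2 : ∀ x ∈ Icc (0:ℝ) 1, |F2'' x| ≤ M)
    (N : ℕ) (hN : 1 ≤ N) :
    |(∑ j ∈ Finset.range (N + 1), 1 / (N:ℝ) * trapWeight N j * F ((j:ℝ) / N))
        - ∫ s in (0:ℝ)..1, F s| ≤ (M + 4 * L) * (1 / (N:ℝ)) ^ 2 := by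
  have hNpos : (0:ℝ) < N := by exact_mod_cast hN
  have hNne : (N:ℝ) ≠ 0 := ne_of_gt hNpos
  have hgap : ∀ j : ℕ, ((j+1:ℕ):ℝ)/N - (j:ℝ)/N = 1/N := by
    intro j
    have h1 : ((j+1:ℕ):ℝ) - (j:ℝ) = 1 := by push_cast; ring
    rw [div_sub_div_same, h1]
  have hmono : ∀ j : ℕ, (j:ℝ)/N ≤ ((j+1:ℕ):ℝ)/N := fun j => node_mono (Nat.le_succ j)
  have hsubj : ∀ j : ℕ, j + 1 ≤ N → Icc ((j:ℝ)/N) (((j+1:ℕ):ℝ)/N) ⊆ Icc (0:ℝ) 1 :=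
    fun j hj => Icc_subset_Icc (node_nonneg N j) (node_le_one hN hj)
  have hint : ∀ j : ℕ, j + 1 ≤ N →
      IntervalIntegrable F volume ((j:ℝ)/N) (((j+1:ℕ):ℝ)/N) := by
    intro j hj
    exact (hFc.mono (by rw [uIcc_of_le (hmono j)]; exact hsubj j hj)).intervalIntegrable
  have hsum : (∑ j ∈ Finset.range (N + 1), 1 / (N:ℝ) * trapWeight N j * F ((j:ℝ)/N))
      = ∑ j ∈ Finset.range N, (1/(N:ℝ)) * ((F ((j:ℝ)/N) + F (((j+1:ℕ):ℝ)/N)) / 2) := by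
    have h0 : ∀ j, 1/(N:ℝ) * trapWeight N j * F ((j:ℝ)/N)
        = 1/(N:ℝ) * (trapWeight N j * F ((j:ℝ)/N)) := fun j => by ring
    simp only [h0]
    rw [← Finset.mul_sum, trap_weight_sum N hN (fun j => F ((j:ℝ)/N)), Finset.mul_sum]
  have hintg : (∫ s in (0:ℝ)..1, F s)
      = ∑ j ∈ Finset.range N, ∫ s in ((j:ℝ)/N)..(((j+1:ℕ):ℝ)/N), F s := by
    have h := intervalIntegral.sum_integral_adjacent_intervals
      (a := fun k : ℕ => (k:ℝ)/N) (n := N) (μ := volume) (f := F)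
      (fun k hk => hint k hk)
    rw [h]
    norm_num
    rw [div_self hNne]
  set E : ℕ → ℝ := fun j => (1/(N:ℝ)) * ((F ((j:ℝ)/N) + F (((j+1:ℕ):ℝ)/N)) / 2)
      - ∫ s in ((j:ℝ)/N)..(((j+1:ℕ):ℝ)/N), F s with hE
  have hdiff : (∑ j ∈ Finset.range (N + 1), 1 / (N:ℝ) * trapWeight N j * F ((j:ℝ)/N))
      - (∫ s in (0:ℝ)..1, F s) = ∑ j ∈ Finset.range N, E j := by
    rw [hsum, hintg, ← Finset.sum_sub_distrib]
  have hterm : ∀ j ∈ Finset.range N, |E j| ≤ M * (1/(N:ℝ))^3 / 2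
      + (if (j:ℝ)/N < c ∧ c < ((j+1:ℕ):ℝ)/N then 2*L*(1/(N:ℝ))^2 else 0) := by
    intro j hj
    rw [Finset.mem_range] at hj
    have hj' : j + 1 ≤ N := hj
    set a := (j:ℝ)/N with ha
    set b := ((j+1:ℕ):ℝ)/N with hb
    have hab : a ≤ b := hmono j
    have hsub : Icc a b ⊆ Icc (0:ℝ) 1 := hsubj j hj'
    have hba : b - a = 1/(N:ℝ)  := hgap j
    have hEj : E j = (b - a)/2 * (F a + F b) - ∫ s in a..b, F s := by
      rw [hE]; simp only; rw [hba, ← ha, ← hb]; ring_nf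
    by_cases hbad : a < c ∧ c < b
    · rw [if_pos hbad]
      have hlip := lip_glue c hc F F1 F1' F2 F2' L hcong1 hcong2 hd11 hd21 hbl1 hbl2
      have := trap_err_lip F a b L hab hL (hFc.mono hsub)
        (fun x hx y hy => hlip x (hsub hx) y (hsub hy))
      rw [hEj, abs_sub_comm]
      have hM3 : 0 ≤ M * (1/(N:ℝ))^3 / 2 := by positivity
      calc |(∫ s in a..b, F s) - (b - a)/2 * (F a + F b)| ≤ 2 * L * (b - a)^2 := this
        _ = 2 * L * (1/(N:ℝ))^2 := by rw [hba]
        _ ≤ M * (1/(N:ℝ))^3 / 2 + 2*L*(1/(N:ℝ))^2 := by linarith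
    · rw [if_neg hbad, add_zero]
      have hcase : c ≤ a ∨ b ≤ c := by
        by_contra hcon
        push_neg at hcon
        exact hbad hcon
      have key : |(∫ s in a..b, F s) - (b - a)/2 * (F a + F b)| ≤ M * (b - a)^3 / 2 := by
        rcases hcase with hca | hbc
        · exact trap_err_on F F2 F2' F2'' a b M hab hsub
            (fun s hs => hcong2 s (hsub hs) (le_trans hca hs.1)) hd21 hd22 hbm2
        · exact trap_err_on F F1 F1' F1'' a b M hab hsub
            (fun s hs => hcong1 s (hsub hs) (le_trans hs.2 hbc)) hd11 hd12 hbm1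
      rw [hEj, abs_sub_comm, ← hba]
      exact key.trans (by rw [hba])
  rw [hdiff]
  have habs := Finset.abs_sum_le_sum_abs E (Finset.range N)
  have hs2 := Finset.sum_le_sum hterm
  have hsplit : ∑ j ∈ Finset.range N, (M * (1/(N:ℝ))^3 / 2
      + (if (j:ℝ)/N < c ∧ c < ((j+1:ℕ):ℝ)/N then 2*L*(1/(N:ℝ))^2 else 0))
      = (N:ℝ) * (M * (1/(N:ℝ))^3 / 2)
        + ∑ j ∈ Finset.range N, (if (j:ℝ)/N < c ∧ c < ((j+1:ℕ):ℝ)/N then 2*L*(1/(N:ℝ))^2 else 0) := by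
    rw [Finset.sum_add_distrib, Finset.sum_const, Finset.card_range, nsmul_eq_mul]
  have hcount : ∑ j ∈ Finset.range N,
      (if (j:ℝ)/N < c ∧ c < ((j+1:ℕ):ℝ)/N then 2*L*(1/(N:ℝ))^2 else 0)
      ≤ 2*L*(1/(N:ℝ))^2 := by
    classical
    rw [← Finset.sum_filter]
    rw [Finset.sum_const, nsmul_eq_mul]
    have hcard : ((Finset.range N).filter
        (fun j : ℕ => (j:ℝ)/N < c ∧ c < ((j+1:ℕ):ℝ)/N)).card ≤ 1 := by
      apply Finset.card_le_one.mpr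
      intro j1 h1 j2 h2
      rw [Finset.mem_filter] at h1 h2
      by_contra hne
      rcases Nat.lt_or_ge j1 j2 with hlt | hge
      · have : ((j1+1:ℕ):ℝ)/N ≤ (j2:ℝ)/N := node_mono hlt
        linarith [h1.2.2, h2.2.1]
      · have hlt2 : j2 < j1 := by omega
        have : ((j2+1:ℕ):ℝ)/N ≤ (j1:ℝ)/N := node_mono hlt2
        linarith [h2.2.2, h1.2.1]
    calc (((Finset.range N).filter _).card : ℝ) * (2*L*(1/(N:ℝ))^2)
        ≤ 1 * (2*L*(1/(N:ℝ))^2) := by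
          apply mul_le_mul_of_nonneg_right _ (by positivity)
          exact_mod_cast hcard
      _ = 2*L*(1/(N:ℝ))^2 := by ring
  have hNh : (N:ℝ) * (M * (1/(N:ℝ))^3 / 2) = M * (1/(N:ℝ))^2 / 2 := by
    field_simp
  calc |∑ j ∈ Finset.range N, E j| ≤ ∑ j ∈ Finset.range N, |E j| := habs
    _ ≤ (N:ℝ) * (M * (1/(N:ℝ))^3 / 2)
        + ∑ j ∈ Finset.range N, (if (j:ℝ)/N < c ∧ c < ((j+1:ℕ):ℝ)/N then 2*L*(1/(N:ℝ))^2 else 0) := by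
        rw [← hsplit]; exact hs2
    _ ≤ M * (1/(N:ℝ))^2 / 2 + 2*L*(1/(N:ℝ))^2 := by
        rw [hNh]; linarith [hcount]
    _ ≤ (M + 4 * L) * (1 / (N:ℝ)) ^ 2 := by nlinarith [sq_nonneg (1/(N:ℝ)), mul_nonneg hM (sq_nonneg (1/(N:ℝ))), mul_nonneg hL (sq_nonneg (1/(N:ℝ)))]


lemma G01_continuous (t : ℝ) : Continuous (fun s => G01 t s) := by
  unfold G01
  apply Continuous.if_le (by fun_prop) (by fun_prop) continuous_id continuous_const
  intro s hs
  simp only [id] at hs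
  subst hs
  ring

lemma G01_bound {t s : ℝ} (ht : t ∈ Icc (0:ℝ) 1) (hs : s ∈ Icc (0:ℝ) 1) :
    |G01 t s| ≤ 1 := by
  obtain ⟨ht0, ht1⟩ := ht
  obtain ⟨hs0, hs1⟩ := hs
  unfold G01
  split
  · rw [abs_le]; constructor <;> nlinarith
  · rw [abs_le]; constructor <;> nlinarith

lemma exists_deriv_data {F : ℝ → ℝ} (hF : ContDiffOn ℝ 2 F (Icc (0:ℝ) 1)) :
    ∃ d1 d2 : ℝ → ℝ, ContinuousOn d1 (Icc (0:ℝ) 1) ∧ ContinuousOn d2 (Icc (0:ℝ) 1) ∧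
      (∀ x ∈ Icc (0:ℝ) 1, HasDerivWithinAt F (d1 x) (Icc 0 1) x) ∧
      (∀ x ∈ Icc (0:ℝ) 1, HasDerivWithinAt d1 (d2 x) (Icc 0 1) x) := by
  have hu : UniqueDiffOn ℝ (Icc (0:ℝ) 1) := uniqueDiffOn_Icc_zero_one
  refine ⟨derivWithin F (Icc 0 1), derivWithin (derivWithin F (Icc 0 1)) (Icc 0 1), ?_, ?_, ?_, ?_⟩
  · exact hF.continuousOn_derivWithin hu (by norm_num)
  · exact (ContDiffOn.derivWithin (m := 1) hF hu (by norm_num)).continuousOn_derivWithin hu (by norm_num)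
  · intro x hx
    exact ((hF.differentiableOn (by norm_num)) x hx).hasDerivWithinAt
  · intro x hx
    exact (((ContDiffOn.derivWithin (m := 1) hF hu (by norm_num)).differentiableOn (by norm_num)) x hx).hasDerivWithinAt

lemma exists_bound {F : ℝ → ℝ} (h : ContinuousOn F (Icc (0:ℝ) 1)) :
    ∃ B : ℝ, 0 ≤ B ∧ ∀ x ∈ Icc (0:ℝ) 1, |F x| ≤ B := by
  obtain ⟨x0, hx0, hmax⟩ := isCompact_Icc.exists_isMaxOn (f := fun x => |F x|)
    (⟨0, by norm_num⟩ : (Icc (0:ℝ) 1).Nonempty) (h.abs)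
  exact ⟨|F x0|, abs_nonneg _, fun x hx => hmax hx⟩


lemma intAnti_contDiffOn {g : ℝ → ℝ} (hg : ContDiffOn ℝ 1 g (Icc (0:ℝ) 1)) :
    ContDiffOn ℝ 2 (fun t => ∫ s in (0:ℝ)..t, g s) (Icc (0:ℝ) 1) := by
  have hu : UniqueDiffOn ℝ (Icc (0:ℝ) 1) := uniqueDiffOn_Icc_zero_one
  set c : ℝ → ℝ := fun x => max 0 (min 1 x) with hc
  have hgt : Continuous (g ∘ c) :=
    hg.continuousOn.comp_continuous (clamp_cont 0 1) (clamp_mem (by norm_num))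
  have hA : ∀ x : ℝ, HasDerivAt (fun u => ∫ s in (0:ℝ)..u, (g ∘ c) s) ((g ∘ c) x) x :=
    fun x => (hgt.integral_hasStrictDerivAt 0 x).hasDerivAt
  have heq : EqOn (fun t => ∫ s in (0:ℝ)..t, g s)
      (fun t => ∫ s in (0:ℝ)..t, (g ∘ c) s) (Icc 0 1) := by
    intro t ht
    apply intervalIntegral.integral_congr
    intro x hx
    rw [uIcc_of_le ht.1] at hx
    have hx1 : x ∈ Icc (0:ℝ) 1 := ⟨hx.1, le_trans hx.2 ht.2⟩
    simp [Function.comp, hc, clamp_eq hx1]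
  apply ContDiffOn.congr ?_ heq
  have hdiff : DifferentiableOn ℝ (fun u => ∫ s in (0:ℝ)..u, (g ∘ c) s) (Icc 0 1) :=
    fun x hx => (hA x).differentiableAt.differentiableWithinAt
  have hder : ∀ x ∈ Icc (0:ℝ) 1,
      derivWithin (fun u => ∫ s in (0:ℝ)..u, (g ∘ c) s) (Icc 0 1) x = (g ∘ c) x :=
    fun x hx => ((hA x).hasDerivWithinAt).derivWithin (hu x hx)
  have h2 : (2 : WithTop ℕ∞) = 1 + 1 := by norm_num
  rw [h2, contDiffOn_succ_iff_derivWithin hu]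
  refine ⟨hdiff, by norm_num, ?_⟩
  apply ContDiffOn.congr hg
  intro x hx
  rw [hder x hx]
  simp [Function.comp, hc, clamp_eq hx]

lemma G01_integral_decomp {ψ : ℝ → ℝ} (hψ : ContinuousOn ψ (Icc (0:ℝ) 1)) {t : ℝ}
    (ht : t ∈ Icc (0:ℝ) 1) :
    ∫ s in (0:ℝ)..1, G01 t s * ψ s
      = (t^2 - 2*t)/2 * (∫ s in (0:ℝ)..t, s * ψ s)
        + (1/2) * (∫ s in (0:ℝ)..t, s^2 * ψ s)
        + t^2/2 * ((∫ s in (0:ℝ)..1, (s-1) * ψ s) - ∫ s in (0:ℝ)..t, (s-1) * ψ s) := by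
  have hI : ∀ (w : ℝ → ℝ), Continuous w → ∀ a b : ℝ, a ∈ Icc (0:ℝ) 1 → b ∈ Icc (0:ℝ) 1 →
      a ≤ b → IntervalIntegrable (fun s => w s * ψ s) volume a b := by
    intro w hw a b haI hbI hab
    apply ContinuousOn.intervalIntegrable
    apply ContinuousOn.mono (hw.continuousOn.mul hψ)
    rw [uIcc_of_le hab]
    exact Icc_subset_Icc haI.1 hbI.2
  have h01 : (0:ℝ) ∈ Icc (0:ℝ) 1 := by norm_num
  have h11 : (1:ℝ) ∈ Icc (0:ℝ) 1 := by norm_num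
  have hGc : Continuous (fun s => G01 t s) := G01_continuous t
  have hsplit : (∫ s in (0:ℝ)..t, G01 t s * ψ s) + (∫ s in t..1, G01 t s * ψ s)
      = ∫ s in (0:ℝ)..1, G01 t s * ψ s :=
    intervalIntegral.integral_add_adjacent_intervals
      (hI _ hGc 0 t h01 ht ht.1) (hI _ hGc t 1 ht h11 ht.2)
  have hsplit2 : (∫ s in (0:ℝ)..t, (s-1) * ψ s) + (∫ s in t..1, (s-1) * ψ s)
      = ∫ s in (0:ℝ)..1, (s-1) * ψ s :=
    intervalIntegral.integral_add_adjacent_intervals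
      (hI _ (by fun_prop) 0 t h01 ht ht.1) (hI _ (by fun_prop) t 1 ht h11 ht.2)
  have h1 : (∫ s in (0:ℝ)..t, G01 t s * ψ s)
      = (t^2 - 2*t)/2 * (∫ s in (0:ℝ)..t, s * ψ s)
        + (1/2) * (∫ s in (0:ℝ)..t, s^2 * ψ s) := by
    have e1 : (∫ s in (0:ℝ)..t, G01 t s * ψ s)
        = ∫ s in (0:ℝ)..t, ((t^2 - 2*t)/2 * (s * ψ s) + (1/2) * (s^2 * ψ s)) := by
      apply intervalIntegral.integral_congr
      intro x hx
      rw [uIcc_of_le ht.1] at hx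
      simp only [G01]
      rw [if_pos hx.2]
      ring
    rw [e1, intervalIntegral.integral_add, intervalIntegral.integral_const_mul,
      intervalIntegral.integral_const_mul]
    · exact (hI _ (by fun_prop) 0 t h01 ht ht.1).const_mul _
    · exact (hI _ (by fun_prop) 0 t h01 ht ht.1).const_mul _
  have h2 : (∫ s in t..1, G01 t s * ψ s) = t^2/2 * ∫ s in t..1, (s-1) * ψ s := by
    have e2 : (∫ s in t..1, G01 t s * ψ s) = ∫ s in t..1, t^2/2 * ((s-1) * ψ s) := by
      apply intervalIntegral.integral_congr
      intro x hx
      rw [uIcc_of_le ht.2] at hx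
      simp only [G01]
      by_cases hxt : x ≤ t
      · have hxe : x = t := le_antisymm hxt hx.1
        subst hxe
        rw [if_pos le_rfl]
        ring
      · rw [if_neg hxt]
        ring
    rw [e2, intervalIntegral.integral_const_mul]
  have h3 : (∫ s in t..1, (s-1) * ψ s)
      = (∫ s in (0:ℝ)..1, (s-1) * ψ s) - ∫ s in (0:ℝ)..t, (s-1) * ψ s := by
    linarith [hsplit2]
  rw [← hsplit, h1, h2, h3]

lemma integ_contDiffOn {ψ : ℝ → ℝ} (hψ : ContDiffOn ℝ 1 ψ (Icc (0:ℝ) 1)) :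
    ContDiffOn ℝ 2 (fun t => ∫ s in (0:ℝ)..1, G01 t s * ψ s) (Icc (0:ℝ) 1) := by
  have hψc := hψ.continuousOn
  apply ContDiffOn.congr ?_ (fun t ht => G01_integral_decomp hψc ht)
  have hA1 : ContDiffOn ℝ 2 (fun t => ∫ s in (0:ℝ)..t, s * ψ s) (Icc (0:ℝ) 1) :=
    intAnti_contDiffOn (contDiffOn_id.mul hψ)
  have hA2 : ContDiffOn ℝ 2 (fun t => ∫ s in (0:ℝ)..t, s^2 * ψ s) (Icc (0:ℝ) 1) :=
    intAnti_contDiffOn ((contDiffOn_id.pow 2).mul hψ)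
  have hA3 : ContDiffOn ℝ 2 (fun t => ∫ s in (0:ℝ)..t, (s-1) * ψ s) (Icc (0:ℝ) 1) :=
    intAnti_contDiffOn ((contDiffOn_id.sub contDiffOn_const).mul hψ)
  have hp1 : ContDiff ℝ 2 (fun t : ℝ => (t^2 - 2*t)/2) :=
    ((contDiff_id.pow 2).sub (contDiff_const.mul contDiff_id)).div_const 2
  have hp3 : ContDiff ℝ 2 (fun t : ℝ => t^2/2) := (contDiff_id.pow 2).div_const 2
  exact ((hp1.contDiffOn.mul hA1).add (contDiffOn_const.mul hA2)).add
    (hp3.contDiffOn.mul (contDiffOn_const.sub hA3))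

lemma psiC_uC_contDiffOn (b1 b2 b3 : ℝ) (φ : ℝ → ℝ) (f : ℝ → ℝ → ℝ → ℝ)
    (hφ : ContDiffOn ℝ 2 φ (Icc 0 1)) (hφm : MapsTo φ (Icc 0 1) (Icc 0 1))
    (hf : ContDiffOn ℝ 2 (fun p : ℝ × ℝ × ℝ => f p.1 p.2.1 p.2.2)
      (Icc 0 1 ×ˢ (univ : Set ℝ) ×ˢ (univ : Set ℝ))) :
    ∀ k, ContDiffOn ℝ 2 (psiC f φ b1 b2 b3 k) (Icc (0:ℝ) 1) := by
  have hgq : ContDiff ℝ 2 (gq b1 b2 b3) := by unfold gq; fun_prop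
  have huC : ∀ k, ContDiffOn ℝ 2 (psiC f φ b1 b2 b3 k) (Icc (0:ℝ) 1) →
      ContDiffOn ℝ 2 (uC f φ b1 b2 b3 k) (Icc (0:ℝ) 1) := by
    intro k hk
    unfold uC
    exact hgq.contDiffOn.add (integ_contDiffOn (hk.of_le (by norm_num)))
  intro k
  induction k with
  | zero =>
    have hrw : psiC f φ b1 b2 b3 0
        = (fun p : ℝ × ℝ × ℝ => f p.1 p.2.1 p.2.2) ∘ (fun t => (t, (0:ℝ), (0:ℝ))) := rfl
    rw [hrw]
    apply hf.comp ((contDiff_id.prodMk (contDiff_const.prodMk contDiff_const)).contDiffOn)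
    intro t ht
    simp [ht]
  | succ k ih =>
    have hu := huC k ih
    have hrw : psiC f φ b1 b2 b3 (k+1)
        = (fun p : ℝ × ℝ × ℝ => f p.1 p.2.1 p.2.2)
          ∘ (fun t => (t, uC f φ b1 b2 b3 k t, uC f φ b1 b2 b3 k (φ t))) := rfl
    rw [hrw]
    apply hf.comp
    · exact contDiffOn_id.prodMk (hu.prodMk (hu.comp hφ hφm))
    · intro t ht
      simp [ht]

lemma uC_contDiffOn (b1 b2 b3 : ℝ) (φ : ℝ → ℝ) (f : ℝ → ℝ → ℝ → ℝ)
    (hφ : ContDiffOn ℝ 2 φ (Icc 0 1)) (hφm : MapsTo φ (Icc 0 1) (Icc 0 1))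
    (hf : ContDiffOn ℝ 2 (fun p : ℝ × ℝ × ℝ => f p.1 p.2.1 p.2.2)
      (Icc 0 1 ×ˢ (univ : Set ℝ) ×ˢ (univ : Set ℝ))) (k : ℕ) :
    ContDiffOn ℝ 2 (uC f φ b1 b2 b3 k) (Icc (0:ℝ) 1) := by
  have hgq : ContDiff ℝ 2 (gq b1 b2 b3) := by unfold gq; fun_prop
  unfold uC
  exact hgq.contDiffOn.add (integ_contDiffOn
    ((psiC_uC_contDiffOn b1 b2 b3 φ f hφ hφm hf k).of_le (by norm_num)))


lemma quad_G (ψ d1 d2 : ℝ → ℝ) (B : ℝ) (hB : 0 ≤ B)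
    (hψc : ContinuousOn ψ (Icc (0:ℝ) 1))
    (hd1 : ∀ x ∈ Icc (0:ℝ) 1, HasDerivWithinAt ψ (d1 x) (Icc 0 1) x)
    (hd2 : ∀ x ∈ Icc (0:ℝ) 1, HasDerivWithinAt d1 (d2 x) (Icc 0 1) x)
    (hb0 : ∀ x ∈ Icc (0:ℝ) 1, |ψ x| ≤ B)
    (hb1 : ∀ x ∈ Icc (0:ℝ) 1, |d1 x| ≤ B)
    (hb2 : ∀ x ∈ Icc (0:ℝ) 1, |d2 x| ≤ B)
    (t : ℝ) (ht : t ∈ Icc (0:ℝ) 1) (N : ℕ) (hN : 1 ≤ N) :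
    |(∑ j ∈ Finset.range (N + 1),
        1/(N:ℝ) * trapWeight N j * (G01 t ((j:ℝ)/N) * ψ ((j:ℝ)/N)))
      - ∫ s in (0:ℝ)..1, G01 t s * ψ s| ≤ 13 * B * (1/(N:ℝ))^2 := by
  obtain ⟨ht0, ht1⟩ := ht
  have hq1 : ∀ x ∈ Icc (0:ℝ) 1,
      HasDerivWithinAt (fun s : ℝ => s/2*(t^2-2*t+s)) ((t^2-2*t)/2 + x) (Icc 0 1) x := by
    intro x hx
    have h := ((((hasDerivAt_id x).div_const 2).mul
      ((hasDerivAt_id x).const_add (t^2-2*t))).hasDerivWithinAt (s := Icc (0:ℝ) 1))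
    convert h using 1
    · rfl
    · rfl
    · rfl
    simp [id]
    ring
  have hq1' : ∀ x ∈ Icc (0:ℝ) 1,
      HasDerivWithinAt (fun s : ℝ => (t^2-2*t)/2 + s) 1 (Icc 0 1) x := by
    intro x hx
    simpa using ((hasDerivAt_id x).const_add ((t^2-2*t)/2)).hasDerivWithinAt (s := Icc (0:ℝ) 1)
  have hq2 : ∀ x ∈ Icc (0:ℝ) 1,
      HasDerivWithinAt (fun s : ℝ => t^2/2*(s-1)) (t^2/2) (Icc 0 1) x := by
    intro x hx
    have h := (((hasDerivAt_id x).sub_const 1).const_mul (t^2/2)).hasDerivWithinAt (s := Icc (0:ℝ) 1)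
    simpa using h
  -- bounds on kernel pieces
  have hq1b : ∀ x ∈ Icc (0:ℝ) 1, |x/2*(t^2-2*t+x)| ≤ 1/2 := by
    intro x hx
    rw [abs_le]; constructor <;> nlinarith [hx.1, hx.2, sq_nonneg t, sq_nonneg (1-t)]
  have hq1b' : ∀ x ∈ Icc (0:ℝ) 1, |(t^2-2*t)/2 + x| ≤ 1 := by
    intro x hx
    rw [abs_le]; constructor <;> nlinarith [hx.1, hx.2, sq_nonneg t, sq_nonneg (1-t)]
  have hq2b : ∀ x ∈ Icc (0:ℝ) 1, |t^2/2*(x-1)| ≤ 1/2 := by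
    intro x hx
    rw [abs_le]; constructor <;> nlinarith [hx.1, hx.2, sq_nonneg t]
  have hq2b' : |t^2/2| ≤ 1/2 := by
    rw [abs_le]; constructor <;> nlinarith
  have key := quad_err t ⟨ht0, ht1⟩
    (fun s => G01 t s * ψ s)
    (fun s => s/2*(t^2-2*t+s) * ψ s)
    (fun s => ((t^2-2*t)/2 + s) * ψ s + s/2*(t^2-2*t+s) * d1 s)
    (fun s => ψ s + 2*((t^2-2*t)/2 + s) * d1 s + s/2*(t^2-2*t+s) * d2 s)
    (fun s => t^2/2*(s-1) * ψ s)
    (fun s => t^2/2 * ψ s + t^2/2*(s-1) * d1 s)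
    (fun s => t^2/2 * d1 s + (t^2/2 * d1 s + t^2/2*(s-1) * d2 s))
    (5*B) (2*B) (by positivity) (by positivity)
    ((G01_continuous t).continuousOn.mul hψc)
    (by -- hcong1
      intro s hs hst
      simp only [G01]
      rw [if_pos hst])
    (by -- hcong2
      intro s hs hts
      simp only [G01]
      by_cases hst : s ≤ t
      · have : s = t := le_antisymm hst hts
        subst this
        rw [if_pos le_rfl]
        ring
      · rw [if_neg hst])
    (by -- hd11
      intro x hx
      exact (hq1 x hx).mul (hd1 x hx))
    (by -- hd12
      intro x hx
      have h := ((hq1' x hx).mul (hd1 x hx)).add ((hq1 x hx).mul (hd2 x hx))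
      convert h using 1
      · rfl
      · rfl
      · rfl
      ring)
    (by -- hd21
      intro x hx
      exact (hq2 x hx).mul (hd1 x hx))
    (by -- hd22
      intro x hx
      have h := ((hd1 x hx).const_mul (t^2/2)).add ((hq2 x hx).mul (hd2 x hx))
      convert h using 1
      · rfl
      · rfl
      · rfl)
    (by -- |F1'| ≤ 2B
      intro x hx
      calc |((t^2-2*t)/2 + x) * ψ x + x/2*(t^2-2*t+x) * d1 x|
          ≤ |((t^2-2*t)/2 + x) * ψ x| + |x/2*(t^2-2*t+x) * d1 x| := abs_add_le _ _
        _ = |(t^2-2*t)/2 + x| * |ψ x| + |x/2*(t^2-2*t+x)| * |d1 x| := by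
            rw [abs_mul, abs_mul]
        _ ≤ 1 * B + (1/2) * B := add_le_add
            (mul_le_mul (hq1b' x hx) (hb0 x hx) (abs_nonneg _) (by norm_num))
            (mul_le_mul (hq1b x hx) (hb1 x hx) (abs_nonneg _) (by norm_num))
        _ ≤ 2 * B := by linarith
    )
    (by -- |F1''| ≤ 5B
      intro x hx
      calc |ψ x + 2*((t^2-2*t)/2 + x) * d1 x + x/2*(t^2-2*t+x) * d2 x|
          ≤ |ψ x + 2*((t^2-2*t)/2 + x) * d1 x| + |x/2*(t^2-2*t+x) * d2 x| := abs_add_le _ _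
        _ ≤ |ψ x| + |2*((t^2-2*t)/2 + x) * d1 x| + |x/2*(t^2-2*t+x) * d2 x| := by
            linarith [abs_add_le (ψ x) (2*((t^2-2*t)/2 + x) * d1 x)]
        _ = |ψ x| + 2 * |(t^2-2*t)/2 + x| * |d1 x| + |x/2*(t^2-2*t+x)| * |d2 x| := by
            rw [abs_mul, abs_mul, abs_mul]
            norm_num
        _ ≤ B + 2 * (1 * B) + (1/2) * B := by
            have h1 := mul_le_mul (hq1b' x hx) (hb1 x hx) (abs_nonneg _) (by norm_num)
            have h2 := mul_le_mul (hq1b x hx) (hb2 x hx) (abs_nonneg _) (by norm_num)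
            have h0 := hb0 x hx
            nlinarith [abs_nonneg (d1 x), abs_nonneg ((t^2-2*t)/2 + x)]
        _ ≤ 5 * B := by linarith
    )
    (by -- |F2'| ≤ 2B
      intro x hx
      calc |t^2/2 * ψ x + t^2/2*(x-1) * d1 x|
          ≤ |t^2/2 * ψ x| + |t^2/2*(x-1) * d1 x| := abs_add_le _ _
        _ = |t^2/2| * |ψ x| + |t^2/2*(x-1)| * |d1 x| := by rw [abs_mul, abs_mul]
        _ ≤ (1/2) * B + (1/2) * B := add_le_add
            (mul_le_mul hq2b' (hb0 x hx) (abs_nonneg _) (by norm_num))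
            (mul_le_mul (hq2b x hx) (hb1 x hx) (abs_nonneg _) (by norm_num))
        _ ≤ 2 * B := by linarith
    )
    (by -- |F2''| ≤ 5B
      intro x hx
      calc |t^2/2 * d1 x + (t^2/2 * d1 x + t^2/2*(x-1) * d2 x)|
          ≤ |t^2/2 * d1 x| + |t^2/2 * d1 x + t^2/2*(x-1) * d2 x| := abs_add_le _ _
        _ ≤ |t^2/2 * d1 x| + (|t^2/2 * d1 x| + |t^2/2*(x-1) * d2 x|) := by
            linarith [abs_add_le (t^2/2 * d1 x) (t^2/2*(x-1) * d2 x)]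
        _ = |t^2/2| * |d1 x| + (|t^2/2| * |d1 x| + |t^2/2*(x-1)| * |d2 x|) := by
            rw [abs_mul, abs_mul, abs_mul]
        _ ≤ (1/2) * B + ((1/2) * B + (1/2) * B) := by
            have h1 := mul_le_mul hq2b' (hb1 x hx) (abs_nonneg _) (by norm_num)
            have h2 := mul_le_mul (hq2b x hx) (hb2 x hx) (abs_nonneg _) (by norm_num)
            linarith
        _ ≤ 5 * B := by linarith
    )
    N hN
  calc |(∑ j ∈ Finset.range (N + 1),
        1/(N:ℝ) * trapWeight N j * (G01 t ((j:ℝ)/N) * ψ ((j:ℝ)/N)))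
      - ∫ s in (0:ℝ)..1, G01 t s * ψ s| ≤ (5*B + 4*(2*B)) * (1/(N:ℝ))^2 := key
    _ = 13 * B * (1/(N:ℝ))^2 := by ring


lemma quad_psiC (b1 b2 b3 : ℝ) (φ : ℝ → ℝ) (f : ℝ → ℝ → ℝ → ℝ)
    (hφ : ContDiffOn ℝ 2 φ (Icc 0 1)) (hφm : MapsTo φ (Icc 0 1) (Icc 0 1))
    (hf : ContDiffOn ℝ 2 (fun p : ℝ × ℝ × ℝ => f p.1 p.2.1 p.2.2)
      (Icc 0 1 ×ˢ (univ : Set ℝ) ×ˢ (univ : Set ℝ))) (k : ℕ) :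
    ∃ C : ℝ, 0 < C ∧ ∀ t ∈ Icc (0:ℝ) 1, ∀ N : ℕ, 1 ≤ N →
      |(∑ j ∈ Finset.range (N + 1),
          1/(N:ℝ) * trapWeight N j * (G01 t ((j:ℝ)/N) * psiC f φ b1 b2 b3 k ((j:ℝ)/N)))
        - ∫ s in (0:ℝ)..1, G01 t s * psiC f φ b1 b2 b3 k s| ≤ C * (1/(N:ℝ))^2 := by
  have hsm := psiC_uC_contDiffOn b1 b2 b3 φ f hφ hφm hf k
  obtain ⟨d1, d2, hc1, hc2, hd1a, hd2a⟩ := exists_deriv_data hsm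
  obtain ⟨B0, hB00, hb0⟩ := exists_bound hsm.continuousOn
  obtain ⟨B1, hB10, hb1⟩ := exists_bound hc1
  obtain ⟨B2, hB20, hb2⟩ := exists_bound hc2
  refine ⟨13 * (B0 + B1 + B2 + 1), by positivity, ?_⟩
  intro t ht N hN
  exact quad_G (psiC f φ b1 b2 b3 k) d1 d2 (B0+B1+B2+1) (by positivity)
    hsm.continuousOn hd1a hd2a (fun x hx => (hb0 x hx).trans (by linarith))
    (fun x hx => (hb1 x hx).trans (by linarith))
    (fun x hx => (hb2 x hx).trans (by linarith)) t ht N hN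

lemma UV_err (b1 b2 b3 : ℝ) (φ : ℝ → ℝ) (f : ℝ → ℝ → ℝ → ℝ)
    (hφm : MapsTo φ (Icc 0 1) (Icc 0 1)) (k : ℕ) (CP CQ : ℝ) (hCP : 0 < CP)
    (hP : ∀ N : ℕ, 1 ≤ N → ∀ i : ℕ, i ≤ N →
      |PsiD f φ b1 b2 b3 N k i - psiC f φ b1 b2 b3 k ((i:ℝ)/N)| ≤ CP * (1/(N:ℝ))^2)
    (hQ : ∀ t ∈ Icc (0:ℝ) 1, ∀ N : ℕ, 1 ≤ N →
      |(∑ j ∈ Finset.range (N + 1),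
          1/(N:ℝ) * trapWeight N j * (G01 t ((j:ℝ)/N) * psiC f φ b1 b2 b3 k ((j:ℝ)/N)))
        - ∫ s in (0:ℝ)..1, G01 t s * psiC f φ b1 b2 b3 k s| ≤ CQ * (1/(N:ℝ))^2) :
    ∀ N : ℕ, 1 ≤ N → ∀ i : ℕ, i ≤ N →
      |UD f φ b1 b2 b3 N k i - uC f φ b1 b2 b3 k ((i:ℝ)/N)| ≤ (2*CP + CQ) * (1/(N:ℝ))^2 ∧
      |VD f φ b1 b2 b3 N k i - vC f φ b1 b2 b3 k ((i:ℝ)/N)| ≤ (2*CP + CQ) * (1/(N:ℝ))^2 := by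
  intro N hN i hi
  have hNpos : (0:ℝ) < N := by exact_mod_cast hN
  have key : ∀ t ∈ Icc (0:ℝ) 1,
      |(∑ j ∈ Finset.range (N + 1),
          1/(N:ℝ) * trapWeight N j * G01 t ((j:ℝ)/N) * PsiD f φ b1 b2 b3 N k j)
        - ∫ s in (0:ℝ)..1, G01 t s * psiC f φ b1 b2 b3 k s|
        ≤ (2*CP + CQ) * (1/(N:ℝ))^2 := by
    intro t ht
    set S1 : ℝ := ∑ j ∈ Finset.range (N + 1), 1/(N:ℝ) * trapWeight N j * G01 t ((j:ℝ)/N)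
        * (PsiD f φ b1 b2 b3 N k j - psiC f φ b1 b2 b3 k ((j:ℝ)/N)) with hS1
    set S2 : ℝ := ∑ j ∈ Finset.range (N + 1), 1/(N:ℝ) * trapWeight N j
        * (G01 t ((j:ℝ)/N) * psiC f φ b1 b2 b3 k ((j:ℝ)/N)) with hS2
    have hsplit : (∑ j ∈ Finset.range (N + 1),
        1/(N:ℝ) * trapWeight N j * G01 t ((j:ℝ)/N) * PsiD f φ b1 b2 b3 N k j) = S1 + S2 := by
      rw [hS1, hS2, ← Finset.sum_add_distrib]
      apply Finset.sum_congr rfl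
      intro j hj
      ring
    have hS1b : |S1| ≤ 2 * CP * (1/(N:ℝ))^2 := by
      have hterm : ∀ j ∈ Finset.range (N + 1),
          |1/(N:ℝ) * trapWeight N j * G01 t ((j:ℝ)/N)
            * (PsiD f φ b1 b2 b3 N k j - psiC f φ b1 b2 b3 k ((j:ℝ)/N))|
          ≤ 1/(N:ℝ) * (CP * (1/(N:ℝ))^2) := by
        intro j hj
        rw [Finset.mem_range, Nat.lt_succ_iff] at hj
        have h1 : |1/(N:ℝ) * trapWeight N j * G01 t ((j:ℝ)/N)| ≤ 1/(N:ℝ) := by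
          rw [abs_mul, abs_mul]
          have e1 : |1/(N:ℝ)| = 1/(N:ℝ) := abs_of_nonneg (by positivity)
          have e2 : |trapWeight N j| ≤ 1 := by
            rw [abs_of_nonneg (trapWeight_nonneg N j)]; exact trapWeight_le_one N j
          have e3 : |G01 t ((j:ℝ)/N)| ≤ 1 := G01_bound ht (node_mem hN hj)
          rw [e1]
          calc 1/(N:ℝ) * |trapWeight N j| * |G01 t ((j:ℝ)/N)|
              ≤ 1/(N:ℝ) * 1 * 1 := by
                apply mul_le_mul _ e3 (abs_nonneg _) (by positivity)
                exact mul_le_mul_of_nonneg_left e2 (by positivity)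
            _ = 1/(N:ℝ) := by ring
        rw [abs_mul]
        exact mul_le_mul h1 (hP N hN j hj) (abs_nonneg _) (by positivity)
      have habs : |S1| ≤ ∑ j ∈ Finset.range (N + 1),
          |1/(N:ℝ) * trapWeight N j * G01 t ((j:ℝ)/N)
            * (PsiD f φ b1 b2 b3 N k j - psiC f φ b1 b2 b3 k ((j:ℝ)/N))| := by
        rw [hS1]
        exact Finset.abs_sum_le_sum_abs _ _
      have hsum2 : (∑ j ∈ Finset.range (N + 1),
          |1/(N:ℝ) * trapWeight N j * G01 t ((j:ℝ)/N)
            * (PsiD f φ b1 b2 b3 N k j - psiC f φ b1 b2 b3 k ((j:ℝ)/N))|)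
          ≤ ∑ _j ∈ Finset.range (N + 1), 1/(N:ℝ) * (CP * (1/(N:ℝ))^2) :=
        Finset.sum_le_sum hterm
      have hconst : (∑ _j ∈ Finset.range (N + 1), 1/(N:ℝ) * (CP * (1/(N:ℝ))^2))
          = ((N:ℝ) + 1) * (1/(N:ℝ) * (CP * (1/(N:ℝ))^2)) := by
        rw [Finset.sum_const, Finset.card_range, nsmul_eq_mul]
        push_cast
        ring
      have hNne : (N:ℝ) ≠ 0 := ne_of_gt hNpos
      have hfin : ((N:ℝ) + 1) * (1/(N:ℝ) * (CP * (1/(N:ℝ))^2)) ≤ 2 * CP * (1/(N:ℝ))^2 := by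
        have e1 : ((N:ℝ)+1) * (1/(N:ℝ) * (CP * (1/(N:ℝ))^2))
            = (((N:ℝ)+1) * (1/(N:ℝ))) * (CP * (1/(N:ℝ))^2) := by ring
        have e2 : ((N:ℝ)+1) * (1/(N:ℝ)) = 1 + 1/(N:ℝ) := by
          rw [add_mul, one_mul, mul_one_div, div_self hNne]
        have hxle : 1/(N:ℝ) ≤ 1 := by
          rw [div_le_one hNpos]
          exact_mod_cast hN
        rw [e1, e2]
        have h12 : (1 + 1/(N:ℝ)) ≤ 2 := by linarith
        calc (1 + 1/(N:ℝ)) * (CP * (1/(N:ℝ))^2) ≤ 2 * (CP * (1/(N:ℝ))^2) :=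
              mul_le_mul_of_nonneg_right h12 (by positivity)
          _ = 2 * CP * (1/(N:ℝ))^2 := by ring
      linarith [habs, hsum2, le_of_eq hconst, ge_of_eq hconst]
    have hS2b := hQ t ht N hN
    rw [hsplit]
    calc |S1 + S2 - ∫ s in (0:ℝ)..1, G01 t s * psiC f φ b1 b2 b3 k s|
        ≤ |S1| + |S2 - ∫ s in (0:ℝ)..1, G01 t s * psiC f φ b1 b2 b3 k s| := by
          have : S1 + S2 - (∫ s in (0:ℝ)..1, G01 t s * psiC f φ b1 b2 b3 k s)
              = S1 + (S2 - ∫ s in (0:ℝ)..1, G01 t s * psiC f φ b1 b2 b3 k s) := by ring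
          rw [this]
          exact abs_add_le _ _
      _ ≤ 2 * CP * (1/(N:ℝ))^2 + CQ * (1/(N:ℝ))^2 := add_le_add hS1b hS2b
      _ = (2*CP + CQ) * (1/(N:ℝ))^2 := by ring
  have hti : ((i:ℝ)/N) ∈ Icc (0:ℝ) 1 := node_mem hN hi
  constructor
  · have hrw : UD f φ b1 b2 b3 N k i - uC f φ b1 b2 b3 k ((i:ℝ)/N)
        = (∑ j ∈ Finset.range (N + 1),
            1/(N:ℝ) * trapWeight N j * G01 ((i:ℝ)/N) ((j:ℝ)/N) * PsiD f φ b1 b2 b3 N k j)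
          - ∫ s in (0:ℝ)..1, G01 ((i:ℝ)/N) s * psiC f φ b1 b2 b3 k s := by
      unfold UD uC
      ring
    rw [hrw]
    exact key _ hti
  · have hrw : VD f φ b1 b2 b3 N k i - vC f φ b1 b2 b3 k ((i:ℝ)/N)
        = (∑ j ∈ Finset.range (N + 1),
            1/(N:ℝ) * trapWeight N j * G01 (φ ((i:ℝ)/N)) ((j:ℝ)/N) * PsiD f φ b1 b2 b3 N k j)
          - ∫ s in (0:ℝ)..1, G01 (φ ((i:ℝ)/N)) s * psiC f φ b1 b2 b3 k s := by
      unfold VD vC uC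
      ring
    rw [hrw]
    exact key _ (hφm hti)


/-- For every fixed `k`, the discrete iterates `U_k` and `V_k` approximate the continuous
iterates `u_k` and `v_k` at the grid nodes with accuracy `O(h²)`, `h = 1/N`. -/
theorem discrete_iterates_u_v_second_order
    (b1 b2 b3 : ℝ) (φ : ℝ → ℝ) (f : ℝ → ℝ → ℝ → ℝ)
    (hφ : ContDiffOn ℝ 2 φ (Icc 0 1)) (hφm : MapsTo φ (Icc 0 1) (Icc 0 1))
    (hf : ContDiffOn ℝ 2 (fun p : ℝ × ℝ × ℝ => f p.1 p.2.1 p.2.2)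
      (Icc 0 1 ×ˢ (univ : Set ℝ) ×ˢ (univ : Set ℝ)))
    (L1 L2 : ℝ) (hL1 : 0 ≤ L1) (hL2 : 0 ≤ L2)
    (hLip : ∀ t ∈ Icc (0:ℝ) 1, ∀ u1 u2 v1 v2 : ℝ,
      |f t u2 v2 - f t u1 v1| ≤ L1 * |u2 - u1| + L2 * |v2 - v1|) :
    ∀ k : ℕ, ∃ C > (0:ℝ), ∀ N : ℕ, 1 ≤ N → ∀ i : ℕ, i ≤ N →
      |UD f φ b1 b2 b3 N k i - uC f φ b1 b2 b3 k ((i : ℝ) / N)| ≤ C * (1 / (N:ℝ)) ^ 2 ∧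
      |VD f φ b1 b2 b3 N k i - vC f φ b1 b2 b3 k ((i : ℝ) / N)| ≤ C * (1 / (N:ℝ)) ^ 2 := by
  
  have hquad := quad_psiC b1 b2 b3 φ f hφ hφm hf
  have main : ∀ k : ℕ, ∃ C : ℝ, 0 < C ∧ ∀ N : ℕ, 1 ≤ N → ∀ i : ℕ, i ≤ N →
      |PsiD f φ b1 b2 b3 N k i - psiC f φ b1 b2 b3 k ((i:ℝ)/N)| ≤ C * (1/(N:ℝ))^2 := by
    intro k
    induction k with
    | zero =>
      refine ⟨1, one_pos, ?_⟩
      intro N hN i hi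
      have h0 : PsiD f φ b1 b2 b3 N 0 i - psiC f φ b1 b2 b3 0 ((i:ℝ)/N) = 0 := by
        simp [PsiD, psiC]
      rw [h0, abs_zero]
      positivity
    | succ k ih =>
      obtain ⟨CP, hCP, hP⟩ := ih
      obtain ⟨CQ, hCQ, hQ⟩ := hquad k
      refine ⟨(L1 + L2) * (2*CP + CQ) + 1, by positivity, ?_⟩
      intro N hN i hi
      have hti : ((i:ℝ)/N) ∈ Icc (0:ℝ) 1 := node_mem hN hi
      have hUV := UV_err b1 b2 b3 φ f hφm k CP CQ hCP hP hQ N hN i hi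
      have heqP : PsiD f φ b1 b2 b3 N (k+1) i
          = f ((i:ℝ)/N) (UD f φ b1 b2 b3 N k i) (VD f φ b1 b2 b3 N k i) := rfl
      have heqp : psiC f φ b1 b2 b3 (k+1) ((i:ℝ)/N)
          = f ((i:ℝ)/N) (uC f φ b1 b2 b3 k ((i:ℝ)/N)) (vC f φ b1 b2 b3 k ((i:ℝ)/N)) := rfl
      rw [heqP, heqp]
      have hstep := hLip ((i:ℝ)/N) hti (uC f φ b1 b2 b3 k ((i:ℝ)/N)) (UD f φ b1 b2 b3 N k i)
        (vC f φ b1 b2 b3 k ((i:ℝ)/N)) (VD f φ b1 b2 b3 N k i)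
      have hh2 : (0:ℝ) ≤ (1/(N:ℝ))^2 := by positivity
      have hb1 := mul_le_mul_of_nonneg_left hUV.1 hL1
      have hb2 := mul_le_mul_of_nonneg_left hUV.2 hL2
      have := hstep.trans (add_le_add hb1 hb2)
      calc |f ((i:ℝ)/N) (UD f φ b1 b2 b3 N k i) (VD f φ b1 b2 b3 N k i)
            - f ((i:ℝ)/N) (uC f φ b1 b2 b3 k ((i:ℝ)/N)) (vC f φ b1 b2 b3 k ((i:ℝ)/N))|
          ≤ L1 * ((2*CP + CQ) * (1/(N:ℝ))^2) + L2 * ((2*CP + CQ) * (1/(N:ℝ))^2) := this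
        _ ≤ ((L1 + L2) * (2*CP + CQ) + 1) * (1/(N:ℝ))^2 := by nlinarith [hh2]
  intro k
  obtain ⟨CP, hCP, hP⟩ := main k
  obtain ⟨CQ, hCQ, hQ⟩ := hquad k
  refine ⟨2*CP + CQ, by positivity, ?_⟩
  intro N hN i hi
  exact UV_err b1 b2 b3 φ f hφm k CP CQ hCP hP hQ N hN i hi
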